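/- Let S be the set of global minimizers of H on a finite connected graph Ω, let Φ̄ = max_{s, s' ∈ S} Φ(s, s'), and let Ω̄ = {η ∈ Ω : Φ(S, η) ≤ Φ̄}. Then Ω̄ is connected (as an induced subgraph) and contains S. -/

import Mathlib

open SimpleGraph

variable {Ω : Type*}

/-- The height of a walk: the maximum of the energy `H` along its support. -/
noncomputable def walkHeight (H : Ω → ℝ) {G : SimpleGraph Ω} {a b : Ω} (w : G.Walk a b) : ℝ :=
  (w.support.map H).foldr max (H b)

/-- The communication height between two vertices: minimal height over all paths. -/
noncomputable def commHeight (G : SimpleGraph Ω) (H : Ω → ℝ) (a b : Ω) : ℝ :=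
  sInf {h : ℝ | ∃ w : G.Walk a b, walkHeight H w = h}

/-- Outer boundary of a set of vertices. -/
def outerBoundary (G : SimpleGraph Ω) (A : Set Ω) : Set Ω :=
  {ξ | ξ ∉ A ∧ ∃ η ∈ A, G.Adj ξ η}

/-- A (nontrivial) cycle: nonempty, connected, proper, with `max_C H < min_{∂C} H`. -/
def IsCycleSet (G : SimpleGraph Ω) (H : Ω → ℝ) (C : Set Ω) : Prop :=
  C.Nonempty ∧ (G.induce C).Connected ∧ C ≠ Set.univ ∧
    ∀ η ∈ C, ∀ ξ ∈ outerBoundary G C, H η < H ξ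

/-- A stable plateau: nonempty, connected, constant energy, strictly higher on the boundary. -/
def IsStablePlateau (G : SimpleGraph Ω) (H : Ω → ℝ) (P : Set Ω) : Prop :=
  P.Nonempty ∧ (G.induce P).Connected ∧ (∀ x ∈ P, ∀ y ∈ P, H x = H y) ∧
    ∀ x ∈ P, ∀ ζ ∈ outerBoundary G P, H x < H ζ

/-- Communication height between two sets. -/
noncomputable def commHeightSet (G : SimpleGraph Ω) (H : Ω → ℝ) (A B : Set Ω) : ℝ :=
  sInf {h : ℝ | ∃ a ∈ A, ∃ b ∈ B, commHeight G H a b = h}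

/-- The bottom of a set: the minimizers of `H` on it. -/
def bottom (H : Ω → ℝ) (C : Set Ω) : Set Ω := {x ∈ C | ∀ y ∈ C, H x ≤ H y}

/-- `A` is a connected component of `S`: a maximal nonempty connected subset of `S`. -/
def IsConnectedComponentOf (G : SimpleGraph Ω) (S A : Set Ω) : Prop :=
  A ⊆ S ∧ A.Nonempty ∧ (G.induce A).Connected ∧
    ∀ B : Set Ω, A ⊆ B → B ⊆ S → (G.induce B).Connected → B = A

lemma base_le_foldr_max (c : ℝ) (l : List ℝ) : c ≤ l.foldr max c := by
  induction l with
  | nil => simp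
  | cons x l ih => exact le_trans ih (le_max_right _ _)

lemma mem_le_foldr_max {x : ℝ} {l : List ℝ} (c : ℝ) (h : x ∈ l) : x ≤ l.foldr max c := by
  induction l with
  | nil => simp at h
  | cons y l ih =>
    rcases List.mem_cons.1 h with rfl | h
    · exact le_max_left _ _
    · exact le_trans (ih h) (le_max_right _ _)

lemma foldr_max_mem (c : ℝ) (l : List ℝ) : l.foldr max c = c ∨ l.foldr max c ∈ l := by
  induction l with
  | nil => simp
  | cons y l ih =>
    rcases max_choice y (l.foldr max c) with h | h
    · right; simp [h]
    · rcases ih with h' | h'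
      · left; simp only [List.foldr_cons, h, h']
        exact sup_eq_right.2 (h' ▸ sup_eq_right.1 h)
      · right; simp only [List.foldr_cons, h]; exact List.mem_cons_of_mem _ h'

lemma le_walkHeight {G : SimpleGraph Ω} {a b : Ω} (H : Ω → ℝ) (w : G.Walk a b)
    {x : Ω} (hx : x ∈ w.support) : H x ≤ walkHeight H w :=
  mem_le_foldr_max _ (List.mem_map_of_mem (f := H) hx)

lemma walkHeight_exists {G : SimpleGraph Ω} {a b : Ω} (H : Ω → ℝ) (w : G.Walk a b) :
    ∃ x ∈ w.support, walkHeight H w = H x := by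
  rcases foldr_max_mem (H b) (w.support.map H) with h | h
  · exact ⟨b, w.end_mem_support, h⟩
  · rcases List.mem_map.1 h with ⟨x, hx, hx'⟩
    exact ⟨x, hx, hx'.symm⟩

lemma walkHeight_mono {G : SimpleGraph Ω} {a b a' b' : Ω} (H : Ω → ℝ)
    {w1 : G.Walk a b} {w2 : G.Walk a' b'} (h : w1.support ⊆ w2.support) :
    walkHeight H w1 ≤ walkHeight H w2 := by
  rcases walkHeight_exists H w1 with ⟨x, hx, hx'⟩
  rw [hx']
  exact le_walkHeight H w2 (h hx)

lemma commHeight_finite [Fintype Ω] (G : SimpleGraph Ω) (H : Ω → ℝ) (a b : Ω) :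
    {h : ℝ | ∃ w : G.Walk a b, walkHeight H w = h}.Finite := by
  apply (Set.finite_range H).subset
  rintro h ⟨w, rfl⟩
  rcases walkHeight_exists H w with ⟨x, _, hx⟩
  exact ⟨x, hx.symm⟩

lemma commHeight_le [Fintype Ω] (G : SimpleGraph Ω) (H : Ω → ℝ) {a b : Ω} (w : G.Walk a b) :
    commHeight G H a b ≤ walkHeight H w :=
  csInf_le (commHeight_finite G H a b).bddBelow ⟨w, rfl⟩

lemma commHeight_exists [Fintype Ω] (G : SimpleGraph Ω) (hG : G.Connected) (H : Ω → ℝ) (a b : Ω) :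
    ∃ w : G.Walk a b, walkHeight H w = commHeight G H a b := by
  have hne : {h : ℝ | ∃ w : G.Walk a b, walkHeight H w = h}.Nonempty := by
    rcases hG.preconnected a b with ⟨w⟩
    exact ⟨_, w, rfl⟩
  exact hne.csInf_mem (commHeight_finite G H a b)

lemma reachable_induce_of_walk {G : SimpleGraph Ω} {A : Set Ω} :
    ∀ {a b : Ω} (w : G.Walk a b) (hw : ∀ x ∈ w.support, x ∈ A),
    (G.induce A).Reachable ⟨a, hw a w.start_mem_support⟩ ⟨b, hw b w.end_mem_support⟩ := by
  intro a b w
  induction w with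
  | nil => intro hw; exact Reachable.refl _
  | @cons u v c h w ih =>
    intro hw
    have hu : u ∈ A := hw u (by simp)
    have hv : v ∈ A := hw v (by simp [SimpleGraph.Walk.support_cons])
    have hadj : (G.induce A).Adj ⟨u, hu⟩ ⟨v, hv⟩ := by
      simp [SimpleGraph.comap_adj, h]
    exact (hadj.reachable).trans (ih fun x hx => hw x (by simp [SimpleGraph.Walk.support_cons, hx]))

/-- the essential set `Ω̄` contains the ground states and is connected. -/
theorem essential_set_connected [Fintype Ω] [Nonempty Ω] (G : SimpleGraph Ω)
    (hG : G.Connected) (H : Ω → ℝ)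
    (S : Set Ω) (hS : S = {x | ∀ y, H x ≤ H y})
    (Φbar : ℝ) (hΦbar : Φbar = sSup {h : ℝ | ∃ s ∈ S, ∃ s' ∈ S, commHeight G H s s' = h})
    (Ωbar : Set Ω) (hΩbar : Ωbar = {η | commHeightSet G H S {η} ≤ Φbar}) :
    S ⊆ Ωbar ∧ (G.induce Ωbar).Connected := by
  classical
  -- S is nonempty
  obtain ⟨s₀, hs₀⟩ := Finite.exists_min H
  have hs₀S : s₀ ∈ S := by rw [hS]; exact hs₀
  -- the sup set is finite, hence bdd above
  have hΦfin : {h : ℝ | ∃ s ∈ S, ∃ s' ∈ S, commHeight G H s s' = h}.Finite := by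
    apply (Set.finite_range (fun p : Ω × Ω => commHeight G H p.1 p.2)).subset
    rintro h ⟨s, _, s', _, rfl⟩
    exact ⟨(s, s'), rfl⟩
  have le_Φbar : ∀ s ∈ S, ∀ s' ∈ S, commHeight G H s s' ≤ Φbar := by
    intro s hs s' hs'
    rw [hΦbar]
    exact le_csSup hΦfin.bddAbove ⟨s, hs, s', hs', rfl⟩
  -- finiteness of the commHeightSet sets
  have hsetfin : ∀ η : Ω, {h : ℝ | ∃ a ∈ S, ∃ b ∈ ({η} : Set Ω), commHeight G H a b = h}.Finite := by
    intro η
    apply (Set.finite_range (fun a : Ω => commHeight G H a η)).subset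
    rintro h ⟨a, _, b, hb, rfl⟩
    rcases hb with rfl
    exact ⟨a, rfl⟩
  have inΩbar : ∀ η : Ω, ∀ s ∈ S, commHeight G H s η ≤ Φbar → η ∈ Ωbar := by
    intro η s hs h
    rw [hΩbar]
    refine le_trans (csInf_le (hsetfin η).bddBelow ⟨s, hs, η, rfl, rfl⟩) h
  have fromΩbar : ∀ η ∈ Ωbar, ∃ s ∈ S, commHeight G H s η ≤ Φbar := by
    intro η hη
    rw [hΩbar] at hη
    have hne : {h : ℝ | ∃ a ∈ S, ∃ b ∈ ({η} : Set Ω), commHeight G H a b = h}.Nonempty :=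
      ⟨_, s₀, hs₀S, η, rfl, rfl⟩
    obtain ⟨a, ha, b, hb, hab⟩ := hne.csInf_mem (hsetfin η)
    rcases hb with rfl
    exact ⟨a, ha, hab.trans_le hη⟩
  -- S ⊆ Ωbar
  have hsub : S ⊆ Ωbar := fun s hs => inΩbar s s hs (le_Φbar s hs s hs)
  refine ⟨hsub, ?_⟩
  -- key reachability lemma
  have key : ∀ s ∈ S, ∀ η : Ω, commHeight G H s η ≤ Φbar →
      ∀ (h1 : s ∈ Ωbar) (h2 : η ∈ Ωbar),
      (G.induce Ωbar).Reachable ⟨s, h1⟩ ⟨η, h2⟩ := by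
    intro s hs η hle h1 h2
    obtain ⟨w, hw⟩ := commHeight_exists G hG H s η
    have hsupp : ∀ x ∈ w.support, x ∈ Ωbar := by
      intro x hx
      refine inΩbar x s hs ?_
      calc commHeight G H s x ≤ walkHeight H (w.takeUntil x hx) :=
            commHeight_le G H _
        _ ≤ walkHeight H w := walkHeight_mono H (Walk.support_takeUntil_subset w hx)
        _ ≤ Φbar := hw.trans_le hle
    exact reachable_induce_of_walk w hsupp
  rw [connected_iff]
  constructor
  · intro ⟨η, hη⟩ ⟨η', hη'⟩
    obtain ⟨s, hs, hsη⟩ := fromΩbar η hη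
    obtain ⟨s', hs', hs'η'⟩ := fromΩbar η' hη'
    have r1 := key s hs η hsη (hsub hs) hη
    have r2 := key s' hs' η' hs'η' (hsub hs') hη'
    have r3 := key s hs s' (le_Φbar s hs s' hs') (hsub hs) (hsub hs')
    exact r1.symm.trans (r3.trans r2)
  · exact ⟨⟨s₀, hsub hs₀S⟩⟩
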